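/- Under the bijection φ from 2-1-3-avoiding permutations to Dyck paths, π avoids the barred pattern 2̄-31 if and only if the Dyck path φ(π) contains no three consecutive steps UDU. -/

import Mathlib

/-- `π` contains the classical pattern 2-1-3: indices `i < j < k` with `π j < π i < π k`. -/
def Contains213 {n : ℕ} (π : Equiv.Perm (Fin n)) : Prop :=
  ∃ i j k : Fin n, i < j ∧ j < k ∧ π j < π i ∧ π i < π k

/-- `π` avoids the barred pattern 2̄-31: every descent `π i > π (i+1)` has some `j < i`
with `π (i+1) < π j < π i`. -/
def AvoidsBarred231 {n : ℕ} (π : Equiv.Perm (Fin n)) : Prop :=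
  ∀ i i' : Fin n, (i' : ℕ) = (i : ℕ) + 1 → π i' < π i →
    ∃ j : Fin n, j < i ∧ π i' < π j ∧ π j < π i

/-- The sorted list of positions of right-to-left maxima of `π`. -/
def rlMaxima {n : ℕ} (π : Equiv.Perm (Fin n)) : List (Fin n) :=
  (Finset.univ.filter fun i : Fin n => ∀ j, i < j → π j < π i).sort (· ≤ ·)

/-- The map `φ` sending a permutation with right-to-left maxima at positions
`i₁ < i₂ < ⋯ < i_m = n` to the lattice path
`U^{i₁} D^{π_{i₁}-π_{i₂}} U^{i₂-i₁} ⋯ U^{i_m-i_{m-1}} D^{π_{i_m}}`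
(positions and values of `Fin n` are 0-indexed, hence the `+ 1`'s). -/
def phi {n : ℕ} (π : Equiv.Perm (Fin n)) : List Bool :=
  match rlMaxima π with
  | [] => []
  | i₁ :: rest =>
      List.replicate ((i₁ : ℕ) + 1) true ++
      (((i₁ :: rest).zip rest).flatMap fun p =>
        List.replicate ((π p.1 : ℕ) - (π p.2 : ℕ)) false ++
        List.replicate ((p.2 : ℕ) - (p.1 : ℕ)) true) ++
      List.replicate ((π (rest.getLastD i₁) : ℕ) + 1) false

/-! ### Auxiliary list lemmas about the pattern `[true, false, true]` -/

lemma noTFT_base (c : ℕ) : ¬ [true, false, true] <:+: (true :: List.replicate c false) := by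
  intro h
  have := h.sublist.count_le true
  simp at this

lemma stripT (k : ℕ) (l : List Bool) :
    [true, false, true] <:+: (List.replicate k true ++ true :: l) ↔
      [true, false, true] <:+: (true :: l) := by
  induction k with
  | zero => simp
  | succ k ih =>
    rw [List.replicate_succ, List.cons_append]
    constructor
    · intro h
      rcases List.infix_cons_iff.mp h with h | h
      · rw [List.cons_prefix_cons] at h
        obtain ⟨-, h⟩ := h
        cases k with
        | zero =>
          simp only [List.replicate_zero, List.nil_append, List.cons_prefix_cons] at h
          exact absurd h.1 (by simp)
        | succ k =>
          rw [List.replicate_succ, List.cons_append, List.cons_prefix_cons] at h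
          exact absurd h.1 (by simp)
      · exact ih.mp h
    · intro h
      exact List.infix_cons_iff.mpr (Or.inr (ih.mpr h))

lemma stripF (b : ℕ) (l : List Bool) :
    [true, false, true] <:+: (List.replicate b false ++ l) ↔ [true, false, true] <:+: l := by
  induction b with
  | zero => simp
  | succ b ih =>
    rw [List.replicate_succ, List.cons_append]
    constructor
    · intro h
      rcases List.infix_cons_iff.mp h with h | h
      · rw [List.cons_prefix_cons] at h
        exact absurd h.1 (by simp)
      · exact ih.mp h
    · intro h
      exact List.infix_cons_iff.mpr (Or.inr (ih.mpr h))

lemma stripTF (b : ℕ) (hb : 2 ≤ b) (l : List Bool) :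
    [true, false, true] <:+: (true :: (List.replicate b false ++ l)) ↔
      [true, false, true] <:+: l := by
  constructor
  · intro h
    rcases List.infix_cons_iff.mp h with h | h
    · obtain ⟨b, rfl⟩ := Nat.exists_eq_add_of_le hb
      rw [show 2 + b = (b+1)+1 by omega, List.replicate_succ, List.replicate_succ,
        List.cons_append, List.cons_append, List.cons_prefix_cons, List.cons_prefix_cons,
        List.cons_prefix_cons] at h
      exact absurd h.2.2.1 (by simp)
    · exact (stripF b l).mp h
  · intro h
    exact List.infix_cons_iff.mpr (Or.inr ((stripF b l).mpr h))

lemma key_tft {α : Type*} (b a : α → ℕ) (ps : List α) (hps : ∀ p ∈ ps, 1 ≤ b p ∧ 1 ≤ a p)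
    (c : ℕ) :
    ([true, false, true] <:+:
      (true :: (ps.flatMap (fun p => List.replicate (b p) false ++ List.replicate (a p) true)
        ++ List.replicate c false))) ↔ ∃ p ∈ ps, b p = 1 := by
  induction ps with
  | nil => simpa using noTFT_base c
  | cons p rest ih =>
    obtain ⟨hb, ha⟩ := hps p (List.mem_cons_self)
    have hrest := fun q hq => hps q (List.mem_cons_of_mem _ hq)
    rw [List.flatMap_cons, List.append_assoc, List.append_assoc]
    rcases eq_or_lt_of_le hb with hb1 | hb2
    · simp only [← hb1, List.replicate_one]
      constructor
      · intro _
        exact ⟨p, List.mem_cons_self, hb1.symm⟩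
      · intro _
        obtain ⟨a', ha'⟩ : ∃ a', a p = a' + 1 := ⟨a p - 1, by omega⟩
        rw [ha', List.replicate_succ, List.singleton_append, List.cons_append]
        exact ⟨[], _, rfl⟩
    · rw [stripTF (b p) hb2]
      obtain ⟨a', ha'⟩ : ∃ a', a p = a' + 1 := ⟨a p - 1, by omega⟩
      rw [ha', List.replicate_succ', List.append_assoc,
        List.singleton_append, stripT, ih hrest]
      constructor
      · exact fun ⟨q, hq, h1⟩ => ⟨q, List.mem_cons_of_mem _ hq, h1⟩
      · rintro ⟨q, hq, h1⟩
        rcases List.mem_cons.mp hq with rfl | hq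
        · omega
        · exact ⟨q, hq, h1⟩

/-! ### Right-to-left maxima machinery -/

section RL
variable {n : ℕ} (π : Equiv.Perm (Fin n))

def RLMax (i : Fin n) : Prop := ∀ j, i < j → π j < π i

lemma mem_rlMaxima_iff {i : Fin n} : i ∈ rlMaxima π ↔ RLMax π i := by
  simp [rlMaxima, RLMax, Finset.mem_sort, Finset.mem_filter]

lemma rlMaxima_sorted : (rlMaxima π).Pairwise (· < ·) := (Finset.sortedLT_sort _).pairwise

lemma sorted_getElem {k j : ℕ} (hk : k < j) (hj : j < (rlMaxima π).length) :
    (rlMaxima π)[k]'(lt_trans hk hj) < (rlMaxima π)[j] := by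
  have := (rlMaxima_sorted π).rel_get_of_lt
    (a := ⟨k, lt_trans hk hj⟩) (b := ⟨j, hj⟩) (by simpa using hk)
  simpa using this

lemma exists_rlmax_ge (p : Fin n) : ∃ q, p ≤ q ∧ RLMax π q ∧ π p ≤ π q := by
  obtain ⟨q, hq, hmax⟩ := Finset.exists_max_image
    (Finset.univ.filter fun r : Fin n => p ≤ r) (fun r => π r)
    ⟨p, by simp⟩
  simp only [Finset.mem_filter, Finset.mem_univ, true_and] at hq hmax
  refine ⟨q, hq, fun j hj => ?_, hmax p le_rfl⟩
  have h1 : π j ≤ π q := hmax j (le_trans hq (le_of_lt hj))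
  have h2 : π j ≠ π q := fun e => (ne_of_gt hj) (π.injective e)
  exact lt_of_le_of_ne h1 h2

def Adj (x y : Fin n) : Prop :=
  ∃ k, ∃ h : k + 1 < (rlMaxima π).length,
    (rlMaxima π)[k]'(Nat.lt_of_succ_lt h) = x ∧ (rlMaxima π)[k+1] = y

variable {π}

lemma Adj.lt {x y : Fin n} (h : Adj π x y) : x < y := by
  obtain ⟨k, hk, rfl, rfl⟩ := h
  exact sorted_getElem π (Nat.lt_succ_self k) hk

lemma Adj.rlmax_left {x y : Fin n} (h : Adj π x y) : RLMax π x := by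
  obtain ⟨k, hk, rfl, rfl⟩ := h
  exact (mem_rlMaxima_iff π).mp (List.getElem_mem _)

lemma Adj.rlmax_right {x y : Fin n} (h : Adj π x y) : RLMax π y := by
  obtain ⟨k, hk, rfl, rfl⟩ := h
  exact (mem_rlMaxima_iff π).mp (List.getElem_mem _)

lemma Adj.no_between {x y : Fin n} (h : Adj π x y) {z : Fin n} (hz : RLMax π z) :
    ¬ (x < z ∧ z < y) := by
  obtain ⟨k, hk, rfl, rfl⟩ := h
  rintro ⟨h1, h2⟩
  obtain ⟨j, hj, rfl⟩ := List.mem_iff_getElem.mp ((mem_rlMaxima_iff π).mpr hz)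
  rcases lt_trichotomy j k with hc | rfl | hc
  · exact absurd (sorted_getElem π hc (Nat.lt_of_succ_lt hk)) (asymm h1)
  · exact lt_irrefl _ h1
  · rcases eq_or_lt_of_le (Nat.succ_le_of_lt hc) with hc' | hc'
    · subst hc'; exact lt_irrefl _ h2
    · exact absurd (sorted_getElem π hc' hj) (asymm h2)

lemma Adj.le_next {x y : Fin n} (h : Adj π x y) {r : Fin n} (hr : x < r) : π r ≤ π y := by
  obtain ⟨q, hrq, hq, hπ⟩ := exists_rlmax_ge π r
  rcases lt_trichotomy q y with hc | rfl | hc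
  · exact absurd ⟨lt_of_lt_of_le hr hrq, hc⟩ (h.no_between hq)
  · exact hπ
  · exact le_of_lt (lt_of_le_of_lt hπ (h.rlmax_right q hc))

lemma mem_zip_adj {q : Fin n × Fin n}
    (hq : q ∈ (rlMaxima π).zip (rlMaxima π).tail) : Adj π q.1 q.2 := by
  obtain ⟨j, hj, hget⟩ := List.mem_iff_getElem.mp hq
  have hlen : j < (rlMaxima π).tail.length := by
    simpa [List.length_zip] using hj
  have hj2 : j + 1 < (rlMaxima π).length := by
    rw [List.length_tail] at hlen; omega
  refine ⟨j, hj2, ?_, ?_⟩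
  · rw [← hget, List.getElem_zip]
  · rw [← hget, List.getElem_zip]
    exact (List.getElem_tail hlen).symm

lemma adj_mem_zip {x y : Fin n} (h : Adj π x y) :
    (x, y) ∈ (rlMaxima π).zip (rlMaxima π).tail := by
  obtain ⟨k, hk, rfl, rfl⟩ := h
  rw [List.mem_iff_getElem]
  have hlen : k < ((rlMaxima π).zip (rlMaxima π).tail).length := by
    rw [List.length_zip, List.length_tail]
    omega
  refine ⟨k, hlen, ?_⟩
  rw [List.getElem_zip]
  have htail : k < (rlMaxima π).tail.length := by rw [List.length_tail]; omega
  rw [List.getElem_tail]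

/-! ### The two combinatorial directions -/

lemma dirA (h213 : ¬ Contains213 π) (hA : AvoidsBarred231 π) {x y : Fin n}
    (hadj : Adj π x y) : (π y : ℕ) + 2 ≤ (π x : ℕ) := by
  have hxy : x < y := hadj.lt
  have hvals : π y < π x := hadj.rlmax_left y hxy
  by_contra hc
  have hval1 : (π x : ℕ) = (π y : ℕ) + 1 := by
    have := Fin.lt_def.mp hvals; omega
  have hx1 : (x : ℕ) + 1 < n := by
    have h1 := Fin.lt_def.mp hxy
    have h2 := y.isLt
    omega
  set p : Fin n := ⟨(x : ℕ) + 1, hx1⟩ with hp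
  have hxp : x < p := by simp [hp, Fin.lt_def]
  have hdesc : π p < π x := hadj.rlmax_left p hxp
  obtain ⟨j, hj, h1, h2⟩ := hA x p rfl hdesc
  by_cases hpy : p = y
  · subst hpy
    have e1 := Fin.lt_def.mp h1
    have e2 := Fin.lt_def.mp h2
    omega
  · have hpley : p ≤ y := by
      rw [Fin.le_def]
      have := Fin.lt_def.mp hxy
      simp [hp]; omega
    have hpy' : p < y := lt_of_le_of_ne hpley hpy
    have hple : π p ≤ π y := hadj.le_next hxp
    have hppy : π p < π y := lt_of_le_of_ne hple (fun e => hpy (π.injective e))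
    have hjy : π j < π y := by
      rw [Fin.lt_def]
      have e2 := Fin.lt_def.mp h2
      have hjney : π j ≠ π y := fun e => by
        have : j = y := π.injective e
        subst this
        exact absurd (lt_trans (lt_trans hj hxp) hpy') (lt_irrefl _)
      have : (π j : ℕ) ≠ (π y : ℕ) := fun e => hjney (Fin.ext e)
      omega
    exact h213 ⟨j, p, y, lt_trans hj hxp, hpy', h1, hjy⟩

lemma dirB (h213 : ¬ Contains213 π)
    (hgap : ∀ x y : Fin n, Adj π x y → (π y : ℕ) + 2 ≤ (π x : ℕ)) :
    AvoidsBarred231 π := by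
  intro i i' hi' hdesc
  have hrl : RLMax π i := by
    by_contra hni
    simp only [RLMax, not_forall, not_lt] at hni
    obtain ⟨q, hiq, hq⟩ := hni
    have hπiq : π i < π q := lt_of_le_of_ne hq (fun e => (ne_of_lt hiq) (π.injective e))
    have hi'q : i' < q := by
      rw [Fin.lt_def]
      have h1 := Fin.lt_def.mp hiq
      have h2 : i' ≠ q := fun e => by
        subst e; exact absurd (lt_trans hdesc hπiq) (lt_irrefl _)
      have h3 : (i' : ℕ) ≠ (q : ℕ) := fun e => h2 (Fin.ext e)
      omega
    exact h213 ⟨i, i', q, by rw [Fin.lt_def]; omega, hi'q, hdesc, hπiq⟩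
  obtain ⟨k, hk, hik⟩ := List.mem_iff_getElem.mp ((mem_rlMaxima_iff π).mpr hrl)
  have hn1 : n - 1 < n := by omega
  have hlastmem : (⟨n - 1, hn1⟩ : Fin n) ∈ rlMaxima π := by
    rw [mem_rlMaxima_iff]
    intro j hj
    have h1 : n - 1 < (j : ℕ) := Fin.lt_def.mp hj
    have h2 := j.isLt
    exact absurd h1 (by omega)
  have hival : (i : ℕ) + 1 ≤ n - 1 := by
    have := i'.isLt; omega
  have hlast : k + 1 < (rlMaxima π).length := by
    by_contra hc
    obtain ⟨j, hj, hjn⟩ := List.mem_iff_getElem.mp hlastmem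
    have hjk : j ≤ k := by omega
    rcases eq_or_lt_of_le hjk with rfl | hjk'
    · rw [hik] at hjn
      have := congrArg Fin.val hjn
      simp at this
      omega
    · have := Fin.lt_def.mp (sorted_getElem π hjk' hk)
      rw [hjn, hik] at this
      simp at this
      omega
  set y := (rlMaxima π)[k+1] with hy
  have hadj : Adj π i y := ⟨k, hlast, hik, rfl⟩
  have hgap2 := hgap i y hadj
  have hiy : i < y := hadj.lt
  have hπi1 : 1 ≤ (π i : ℕ) := by
    have := Fin.lt_def.mp hdesc; omega
  set v : Fin n := ⟨(π i : ℕ) - 1, by have := (π i).isLt; omega⟩ with hv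
  set p := π.symm v with hpdef
  have hpv : π p = v := π.apply_symm_apply v
  have hi'v : (π i' : ℕ) < (v : ℕ) := by
    have hi'y : (π i' : ℕ) ≤ (π y : ℕ) := by
      rcases eq_or_ne i' y with rfl | hne
      · exact le_rfl
      · have h1 : i < i' := by rw [Fin.lt_def]; omega
        exact Fin.le_def.mp (hadj.le_next h1)
    simp [hv]; omega
  have hpi : p < i := by
    have hpne : p ≠ i := by
      intro e
      rw [e] at hpv
      have := Fin.ext_iff.mp hpv
      simp [hv] at this
      omega
    rcases lt_or_gt_of_ne hpne with h' | h'
    · exact h'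
    · exfalso
      have hprl : RLMax π p := by
        intro q hq
        have h1 := Fin.lt_def.mp (hrl q (lt_trans h' hq))
        have h2 : π q ≠ v := fun e => by
          have : q = p := π.injective (e.trans hpv.symm)
          exact absurd this (ne_of_gt hq)
        have h3 : (π q : ℕ) ≠ (v : ℕ) := fun e => h2 (Fin.ext e)
        rw [Fin.lt_def, hpv]
        simp [hv] at h3 ⊢
        omega
      rcases lt_trichotomy p y with hc | heq | hc
      · exact hadj.no_between hprl ⟨h', hc⟩
      · rw [heq] at hpv
        have := Fin.ext_iff.mp hpv
        simp [hv] at this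
        omega
      · have := Fin.lt_def.mp (hadj.rlmax_right p hc)
        have hpvv := Fin.ext_iff.mp hpv
        simp [hv] at hpvv
        omega
  refine ⟨p, hpi, ?_, ?_⟩
  · rw [Fin.lt_def, hpv]; exact hi'v
  · rw [Fin.lt_def, hpv]; simp [hv]; omega

end RL

/-! ### The path characterization -/

lemma phi_tft {n : ℕ} (π : Equiv.Perm (Fin n)) {i₁ : Fin n} {rest : List (Fin n)}
    (hL : rlMaxima π = i₁ :: rest) :
    ([true, false, true] <:+: phi π) ↔
      ∃ q ∈ (i₁ :: rest).zip rest, (π q.1 : ℕ) - (π q.2 : ℕ) = 1 := by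
  have hphi : phi π =
      List.replicate ((i₁ : ℕ) + 1) true ++
      (((i₁ :: rest).zip rest).flatMap fun p =>
        List.replicate ((π p.1 : ℕ) - (π p.2 : ℕ)) false ++
        List.replicate ((p.2 : ℕ) - (p.1 : ℕ)) true) ++
      List.replicate ((π (rest.getLastD i₁) : ℕ) + 1) false := by
    rw [phi, hL]
  rw [hphi]
  have hps : ∀ q ∈ (i₁ :: rest).zip rest,
      1 ≤ (π q.1 : ℕ) - (π q.2 : ℕ) ∧ 1 ≤ (q.2 : ℕ) - (q.1 : ℕ) := by
    intro q hq
    have hq' : q ∈ (rlMaxima π).zip (rlMaxima π).tail := by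
      rw [hL]; exact hq
    have hadj := mem_zip_adj hq'
    have h1 : q.1 < q.2 := hadj.lt
    have h2 : π q.2 < π q.1 := hadj.rlmax_left q.2 h1
    exact ⟨by have := Fin.lt_def.mp h2; omega, by have := Fin.lt_def.mp h1; omega⟩
  rw [List.replicate_succ', List.append_assoc, List.append_assoc, List.singleton_append,
    stripT]
  exact key_tft (fun q : Fin n × Fin n => (π q.1 : ℕ) - (π q.2 : ℕ))
    (fun q : Fin n × Fin n => (q.2 : ℕ) - (q.1 : ℕ)) _ hps _

theorem stmt4 (n : ℕ) (π : Equiv.Perm (Fin n)) (h : ¬ Contains213 π) :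
    AvoidsBarred231 π ↔ ¬ ([true, false, true] <:+: phi π) := by
  cases hL : rlMaxima π with
  | nil =>
    have hempty : ∀ i : Fin n, False := by
      intro i
      obtain ⟨q, -, hq, -⟩ := exists_rlmax_ge π i
      have : q ∈ rlMaxima π := (mem_rlMaxima_iff π).mpr hq
      rw [hL] at this
      exact absurd this (List.not_mem_nil)
    have hphi : phi π = [] := by rw [phi, hL]
    constructor
    · intro _ hc
      rw [hphi] at hc
      have := hc.sublist.length_le
      simp at this
    · intro _ i i' _ _
      exact absurd trivial (fun _ => hempty i)
  | cons i₁ rest =>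
    rw [phi_tft π hL]
    constructor
    · intro hA hcon
      obtain ⟨q, hq, h1⟩ := hcon
      have hq' : q ∈ (rlMaxima π).zip (rlMaxima π).tail := by rw [hL]; exact hq
      have hadj := mem_zip_adj hq'
      have hgap := dirA h hA hadj
      omega
    · intro hni
      apply dirB h
      intro x y hadj
      have hmem : (x, y) ∈ (rlMaxima π).zip (rlMaxima π).tail := adj_mem_zip hadj
      rw [hL] at hmem
      have hlt : π y < π x := hadj.rlmax_left y hadj.lt
      have hlt' := Fin.lt_def.mp hlt
      by_contra hc
      exact hni ⟨(x, y), hmem, by simp; omega⟩
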